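/- For every real number r > 0 and every real ε > 0, there exists a finite set S of rational primes such that r − ε < (1/2)·Σ_{p ∈ S} log(p)/(p+1) and Σ_{p ∈ S} log(p)/(p−1) ≤ 2r. -/

import Mathlib

open NumberField

noncomputable section

/-- A fixed algebraic closure of `ℚ`. -/
abbrev Qbar : Type := AlgebraicClosure ℚ

/-- The set of ramification indices of the primes of `𝒪_F` above `p`. -/
def ramIdxSet (p : ℕ) (F : IntermediateField ℚ Qbar) : Set ℕ :=
  {e | ∃ P : Ideal (𝓞 F), P.IsMaximal ∧ (p : 𝓞 F) ∈ P ∧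
        e = Ideal.ramificationIdx' (Ideal.span {(p : ℤ)}) P}

/-- The set of inertia degrees of the primes of `𝒪_F` above `p`. -/
def inertiaDegSet (p : ℕ) (F : IntermediateField ℚ Qbar) : Set ℕ :=
  {f | ∃ P : Ideal (𝓞 F), P.IsMaximal ∧ (p : 𝓞 F) ∈ P ∧
        f = Ideal.inertiaDeg' (Ideal.span {(p : ℤ)}) P}

/-- For `F/ℚ` finite Galois, the common ramification index of primes above `p`
(realized as a supremum, which for a Galois extension is the common value). -/
def eFin (p : ℕ) (F : IntermediateField ℚ Qbar) : ℕ := sSup (ramIdxSet p F)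

/-- For `F/ℚ` finite Galois, the common inertia degree of primes above `p`. -/
def fFin (p : ℕ) (F : IntermediateField ℚ Qbar) : ℕ := sSup (inertiaDegSet p F)

/-- A rational prime `p` splits totally in `F` if every maximal ideal of `𝒪_F` above `p`
has ramification index `1` and inertia degree `1`. -/
def SplitsTotally (p : ℕ) (F : IntermediateField ℚ Qbar) : Prop :=
  ∀ P : Ideal (𝓞 F), P.IsMaximal → (p : 𝓞 F) ∈ P →
    Ideal.ramificationIdx' (Ideal.span {(p : ℤ)}) P = 1 ∧
    Ideal.inertiaDeg' (Ideal.span {(p : ℤ)}) P = 1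

/-- The (possibly infinite) ramification index of a Galois extension `L/ℚ` at `p`. -/
def eInfty (p : ℕ) (L : IntermediateField ℚ Qbar) : ℕ∞ :=
  ⨆ (K : IntermediateField ℚ Qbar) (_ : K ≤ L) (_ : FiniteDimensional ℚ K)
    (_ : IsGalois ℚ K), (eFin p K : ℕ∞)

/-- The (possibly infinite) inertia degree of a Galois extension `L/ℚ` at `p`. -/
def fInfty (p : ℕ) (L : IntermediateField ℚ Qbar) : ℕ∞ :=
  ⨆ (K : IntermediateField ℚ Qbar) (_ : K ≤ L) (_ : FiniteDimensional ℚ K)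
    (_ : IsGalois ℚ K), (fFin p K : ℕ∞)

/-- `𝔖_p(L) = log p / (e_p(L)·(p^{f_p(L)}+1))` if `e_p(L)` and `f_p(L)` are both finite,
and `0` otherwise. -/
def SfrakP (p : ℕ) (L : IntermediateField ℚ Qbar) : ENNReal :=
  if eInfty p L ≠ ⊤ ∧ fInfty p L ≠ ⊤ then
    ENNReal.ofReal (Real.log p /
      (((eInfty p L).toNat : ℝ) * ((p : ℝ) ^ (fInfty p L).toNat + 1)))
  else 0

/-- `𝔖(L) = Σ_p 𝔖_p(L)`. -/
def Sfrak (L : IntermediateField ℚ Qbar) : ENNReal :=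
  ∑' p : Nat.Primes, SfrakP (p : ℕ) L

/-- `p_L` : the smallest odd rational prime whose inertia degree in `L` is `1`. -/
def pOf (L : IntermediateField ℚ Qbar) : ℕ :=
  sInf {q : ℕ | q.Prime ∧ q ≠ 2 ∧ fFin q L = 1}

/-- Property `(𝒟ℒ)` for a finite group `G`. -/
def HasDL (G : Type*) [Group G] : Prop :=
  ∀ L : IntermediateField ℚ Qbar, FiniteDimensional ℚ L → IsGalois ℚ L →
    ∃ K : IntermediateField ℚ Qbar, FiniteDimensional ℚ K ∧ IsGalois ℚ K ∧
      Nonempty ((K ≃ₐ[ℚ] K) ≃* G) ∧ K ⊓ L = ⊥ ∧ 2 ≤ fFin (pOf L) K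

end

/-- For all real `r > 0` and `ε > 0` there is a finite set `S` of primes with
`r − ε < (1/2)·Σ_{p ∈ S} log p/(p+1)` and `Σ_{p ∈ S} log p/(p−1) ≤ 2r`. -/
theorem stmt_19 (r ε : ℝ) (hr : 0 < r) (hε : 0 < ε) :
    ∃ S : Finset ℕ, (∀ p ∈ S, p.Prime) ∧
      r - ε < (1 / 2) * ∑ p ∈ S, Real.log p / ((p : ℝ) + 1) ∧
      ∑ p ∈ S, Real.log p / ((p : ℝ) - 1) ≤ 2 * r := by
  classical
  have h2r : (0:ℝ) < 1 + 2*r := by linarith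
  obtain ⟨δ, hδpos, hδr, hδhalf, hδε⟩ :
      ∃ δ : ℝ, 0 < δ ∧ δ ≤ r ∧ δ ≤ 1/2 ∧ δ * (1 + 2*r) ≤ ε := by
    refine ⟨min (min r (1/2)) (ε / (1 + 2*r)), ?_, ?_, ?_, ?_⟩
    · exact lt_min (lt_min hr (by norm_num)) (by positivity)
    · exact le_trans (min_le_left _ _) (min_le_left _ _)
    · exact le_trans (min_le_left _ _) (min_le_right _ _)
    · calc min (min r (1/2)) (ε / (1 + 2*r)) * (1 + 2*r)
          ≤ (ε / (1 + 2*r)) * (1 + 2*r) :=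
            mul_le_mul_of_nonneg_right (min_le_right _ _) (le_of_lt h2r)
        _ = ε := by field_simp
  obtain ⟨N, hN⟩ := exists_nat_ge (max (2/δ) (16/δ^2))
  set g : ℕ → ℝ := fun n => if n.Prime ∧ N ≤ n then Real.log n / ((n:ℝ) - 1) else 0
    with hg
  have hgnonneg : ∀ n, 0 ≤ g n := by
    intro n
    simp only [hg]
    split
    · rename_i h
      have h2 : (2:ℝ) ≤ (n:ℝ) := by exact_mod_cast h.1.two_le
      exact div_nonneg (Real.log_nonneg (by linarith)) (by linarith)
    · exact le_refl 0
  -- per-term facts for primes ≥ N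
  have key : ∀ n : ℕ, n.Prime → N ≤ n →
      Real.log n / ((n:ℝ) - 1) ≤ δ ∧
      (1 - δ) * (Real.log n / ((n:ℝ) - 1)) ≤ Real.log n / ((n:ℝ) + 1) := by
    intro n hp hNn
    have hn2 : (2:ℝ) ≤ (n:ℝ) := by exact_mod_cast hp.two_le
    have hnN : (N:ℝ) ≤ (n:ℝ) := by exact_mod_cast hNn
    have hn1 : (2:ℝ)/δ ≤ (n:ℝ) := le_trans (le_trans (le_max_left _ _) hN) hnN
    have hn16 : (16:ℝ)/δ^2 ≤ (n:ℝ) := le_trans (le_trans (le_max_right _ _) hN) hnN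
    have hδn : 2 ≤ δ * n := by rw [div_le_iff₀ hδpos] at hn1; linarith
    have hlog : 0 ≤ Real.log n := Real.log_nonneg (by linarith)
    have hnm1 : (0:ℝ) < (n:ℝ) - 1 := by linarith
    have hnp1 : (0:ℝ) < (n:ℝ) + 1 := by linarith
    constructor
    · -- log n / (n-1) ≤ δ
      set s : ℝ := Real.sqrt n with hs
      have hs0 : 0 ≤ s := Real.sqrt_nonneg _
      have hs2 : s^2 = (n:ℝ) := Real.sq_sqrt (by linarith)
      have hs4 : 4/δ ≤ s := by
        have h' : Real.sqrt (16/δ^2) ≤ s := Real.sqrt_le_sqrt hn16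
        calc (4:ℝ)/δ = Real.sqrt (16/δ^2) := by
              rw [show (16:ℝ)/δ^2 = (4/δ)^2 by ring]
              exact (Real.sqrt_sq (by positivity)).symm
          _ ≤ s := h'
      have hδs : 4 ≤ δ * s := by rw [div_le_iff₀ hδpos] at hs4; linarith
      have hlogle : Real.log n ≤ 2 * s := by
        have h1 : Real.log s ≤ s - 1 := Real.log_le_sub_one_of_pos (by nlinarith)
        have h2 : Real.log n = 2 * Real.log s := by
          rw [hs, Real.log_sqrt (by linarith)]; ring
        linarith
      rw [div_le_iff₀ hnm1]
      nlinarith [hδs, hs2, hδhalf, hs0]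
    · -- (1-δ) * (log n/(n-1)) ≤ log n/(n+1)
      rw [mul_div_assoc' (1-δ), div_le_div_iff₀ hnm1 hnp1]
      nlinarith [mul_nonneg hlog (show (0:ℝ) ≤ δ * ((n:ℝ)+1) - 2 by nlinarith)]
  -- g is not summable
  have hgns : ¬ Summable g := by
    intro hsum
    have hlog2 : (0:ℝ) < Real.log 2 := Real.log_pos (by norm_num)
    set d : ℕ → ℝ := fun n => if n < N then 1 else 0 with hd
    have hdnonneg : ∀ n, (0:ℝ) ≤ d n := by
      intro n; simp only [hd]; split <;> norm_num
    have hdsum : Summable d := by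
      apply summable_of_finite_support
      apply Set.Finite.subset (Set.finite_Iio N)
      intro n hn
      simp only [hd, Function.mem_support] at hn
      by_contra hc
      simp only [Set.mem_Iio, not_lt] at hc
      exact hn (by simp [Nat.not_lt.mpr hc])
    have hmaj : Summable (fun n => (1/Real.log 2) * g n + d n) :=
      (hsum.mul_left _).add hdsum
    apply not_summable_one_div_on_primes
    apply Summable.of_nonneg_of_le _ _ hmaj
    · intro n
      apply Set.indicator_nonneg
      intro p _
      positivity
    · intro n
      by_cases hpn : n.Prime
      · rw [Set.indicator_of_mem (show n ∈ {p | Nat.Prime p} from hpn)]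
        have h2 : (2:ℝ) ≤ (n:ℝ) := by exact_mod_cast hpn.two_le
        by_cases hNn : N ≤ n
        · have hmain : (1:ℝ)/n ≤ (1/Real.log 2) * g n := by
            simp only [hg, if_pos (And.intro hpn hNn)]
            have hlogn : Real.log 2 ≤ Real.log n := Real.log_le_log (by norm_num) h2
            calc (1:ℝ)/n ≤ 1/((n:ℝ)-1) :=
                  one_div_le_one_div_of_le (by linarith) (by linarith)
              _ = (1/Real.log 2) * (Real.log 2/((n:ℝ)-1)) := by field_simp
              _ ≤ (1/Real.log 2) * (Real.log n/((n:ℝ)-1)) := by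
                  apply mul_le_mul_of_nonneg_left _ (by positivity)
                  exact (div_le_div_iff_of_pos_right (by linarith)).mpr hlogn
          exact le_trans hmain (le_add_of_nonneg_right (hdnonneg n))
        · have hgz : g n = 0 := by simp only [hg]; exact if_neg (fun h => hNn h.2)
          have hdz : d n = 1 := by simp only [hd, if_pos (Nat.lt_of_not_le hNn)]
          rw [hgz, hdz, mul_zero, zero_add]
          rw [div_le_one (by linarith)]; linarith
      · rw [Set.indicator_of_notMem (show n ∉ {p | Nat.Prime p} from hpn)]
        have h1 := hgnonneg n
        have h2 := hdnonneg n
        positivity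
  -- partial sums of g tend to infinity
  have htend := (not_summable_iff_tendsto_nat_atTop_of_nonneg hgnonneg).mp hgns
  have cross : ∀ M : ℕ, 2*r - δ < ∑ i ∈ Finset.range M, g i →
      ∃ m : ℕ, 2*r - δ < ∑ i ∈ Finset.range m, g i ∧ ∑ i ∈ Finset.range m, g i ≤ 2*r := by
    intro M
    induction M with
    | zero =>
      intro h
      simp only [Finset.range_zero, Finset.sum_empty] at h
      linarith
    | succ M ih =>
      intro h
      by_cases hc : 2*r - δ < ∑ i ∈ Finset.range M, g i
      · exact ih hc
      · push_neg at hc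
        refine ⟨M+1, h, ?_⟩
        rw [Finset.sum_range_succ]
        have hgM : g M ≤ δ := by
          simp only [hg]
          split
          · rename_i hh; exact (key M hh.1 hh.2).1
          · linarith
        linarith
  obtain ⟨M0, hM0⟩ := (htend.eventually_gt_atTop (2*r - δ)).exists
  obtain ⟨M, hMgt, hsumle⟩ := cross M0 hM0
  -- define S
  refine ⟨(Finset.range M).filter (fun n => n.Prime ∧ N ≤ n), ?_, ?_, ?_⟩
  · intro p hp
    exact (Finset.mem_filter.mp hp).2.1
  · -- lower bound
    have hsum1 : ∑ p ∈ (Finset.range M).filter (fun n => n.Prime ∧ N ≤ n),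
        Real.log p / ((p:ℝ) - 1) = ∑ i ∈ Finset.range M, g i := by
      rw [Finset.sum_filter]
    have hlb : (1-δ) * ∑ p ∈ (Finset.range M).filter (fun n => n.Prime ∧ N ≤ n),
        Real.log p / ((p:ℝ) - 1) ≤
        ∑ p ∈ (Finset.range M).filter (fun n => n.Prime ∧ N ≤ n),
        Real.log p / ((p:ℝ) + 1) := by
      rw [Finset.mul_sum]
      apply Finset.sum_le_sum
      intro p hp
      obtain ⟨_, hp1, hp2⟩ := Finset.mem_filter.mp hp
      exact (key p hp1 hp2).2
    have habs : ∀ A B : ℝ, 2*r - δ < A → (1-δ) * A ≤ B → r - ε < (1/2) * B := by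
      intro A B h1 h2
      nlinarith
    exact habs _ _ (hsum1 ▸ hMgt) hlb
  · rw [Finset.sum_filter]
    exact hsumle
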